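/- Let H be a d-dimensional affine space and σ a simplex with dim(σ) ≤ d contained in the t-tubular neighborhood of H for some t ≥ 0. Then sin ∠(Aff σ, H) ≤ 2·t·dim(σ)/height(σ). -/

import Mathlib

open Metric Set
open scoped Classical

noncomputable section

abbrev Euc (N : ℕ) := EuclideanSpace ℝ (Fin N)

variable {N : ℕ}

/-- The medial axis of `A`: points with at least two closest points in `A`. -/
def medialAxis (A : Set (Euc N)) : Set (Euc N) :=
  {x | ∃ a ∈ A, ∃ b ∈ A, a ≠ b ∧ dist x a = infDist x A ∧ dist x b = infDist x A}

/-- `p` is a nearest point of `A` to `x`. -/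
def IsNearestPt (A : Set (Euc N)) (x p : Euc N) : Prop :=
  p ∈ A ∧ dist x p = infDist x A

/-- `π` is a nearest-point projection map onto `A`, defined off the medial axis. -/
def IsNearestPtProj (A : Set (Euc N)) (π : Euc N → Euc N) : Prop :=
  ∀ x, x ∉ medialAxis A → IsNearestPt A x (π x)

/-- The angle between two linear subspaces: sup over unit vectors of `V₀` of the inf of
angles with unit vectors of `V₁`. -/
def subAngle (V₀ V₁ : Submodule ℝ (Euc N)) : ℝ :=
  sSup {a | ∃ v₀ ∈ V₀, ‖v₀‖ = 1 ∧
    a = sInf {b | ∃ v₁ ∈ V₁, ‖v₁‖ = 1 ∧ b = InnerProductGeometry.angle v₀ v₁}}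

/-- Angle between two affine subspaces. -/
def affAngle (H₀ H₁ : AffineSubspace ℝ (Euc N)) : ℝ :=
  subAngle H₀.direction H₁.direction

/-- Angle between the line through `u, v` and the affine subspace `H`. -/
def lineAngle (u v : Euc N) (H : AffineSubspace ℝ (Euc N)) : ℝ :=
  subAngle (Submodule.span ℝ {v - u}) H.direction

/-- Orthogonal projection onto an affine subspace (the identity if `H` is empty). -/
def projA (H : AffineSubspace ℝ (Euc N)) (x : Euc N) : Euc N :=
  if h : (H : Set (Euc N)).Nonempty then
    h.choose + (H.direction.orthogonalProjectionOnto (x - h.choose) : Euc N)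
  else x

/-- The minimal height of a simplex (over all vertices, distance to opposite facet). -/
def height (σ : Finset (Euc N)) : ℝ :=
  sInf ((fun v => infDist v (affineSpan ℝ ((σ.erase v : Finset (Euc N)) : Set (Euc N)))) '' σ)

/-- `σ` is a non-degenerate simplex: its vertices are affinely independent. -/
def Nondegenerate (σ : Finset (Euc N)) : Prop :=
  AffineIndependent ℝ (fun p : σ => (p : Euc N))

/-- The sphere centered at `z` of radius `r` circumscribes `σ`. -/
def IsCircum (σ : Finset (Euc N)) (z : Euc N) (r : ℝ) : Prop :=
  ∀ p ∈ σ, dist p z = r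

/-- `(z, r)` is the smallest circumscribing sphere of `σ`. -/
def IsMinCircum (σ : Finset (Euc N)) (z : Euc N) (r : ℝ) : Prop :=
  IsCircum σ z r ∧ ∀ z' r', IsCircum σ z' r' → r ≤ r'

/-- `(c, r)` is the smallest enclosing ball of `σ`. -/
def IsSEB (σ : Finset (Euc N)) (c : Euc N) (r : ℝ) : Prop :=
  (∀ p ∈ σ, dist p c ≤ r) ∧ ∀ c' r', (∀ p ∈ σ, dist p c' ≤ r') → r ≤ r'

/-- `σ` is a Delaunay simplex of the point set `Q`: some circumscribing sphere of `σ`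
bounds a ball containing no point of `Q` in its interior. -/
def IsDelaunay (Q : Set (Euc N)) (σ : Finset (Euc N)) : Prop :=
  (σ : Set (Euc N)) ⊆ Q ∧ ∃ z r, IsCircum σ z r ∧ ∀ q ∈ Q, r ≤ dist q z

/-- Separation of a point set: infimum of pairwise distances. -/
def sep (X : Set (Euc N)) : ℝ :=
  sInf {r | ∃ x ∈ X, ∃ y ∈ X, x ≠ y ∧ r = dist x y}

/-- A relation is a multiplicative `M`-distortion. -/
def MulDistortion (R : Set (Euc N × Euc N)) (M : ℝ) : Prop :=
  ∀ p ∈ R, ∀ q ∈ R,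
    (1 / (1 + M)) * dist p.1 q.1 ≤ dist p.2 q.2 ∧ dist p.2 q.2 ≤ (1 + M) * dist p.1 q.1

/-- A relation is an additive `A`-distortion. -/
def AddDistortion (R : Set (Euc N × Euc N)) (A : ℝ) : Prop :=
  ∀ p ∈ R, ∀ q ∈ R, |dist p.2 q.2 - dist p.1 q.1| ≤ A

/-- A relation is one-to-one: injective and functional. -/
def OneToOneRel (R : Set (Euc N × Euc N)) : Prop :=
  (∀ p ∈ R, ∀ q ∈ R, p.2 = q.2 → p.1 = q.1) ∧ (∀ p ∈ R, ∀ q ∈ R, p.1 = q.1 → p.2 = q.2)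

/-- `M` is a `C²` `d`-dimensional submanifold of `ℝᴺ` with tangent spaces given by `T`. -/
def IsC2Submanifold (d : ℕ) (M : Set (Euc N)) (T : Euc N → Submodule ℝ (Euc N)) : Prop :=
  ∀ m ∈ M, ∃ (φ : EuclideanSpace ℝ (Fin d) → Euc N) (U : Set (Euc N)),
    IsOpen U ∧ m ∈ U ∧ ContDiff ℝ 2 φ ∧ Function.Injective φ ∧
    (∀ x, Function.Injective (fderiv ℝ φ x)) ∧
    Set.range φ = M ∩ U ∧
    ∀ x, T (φ x) = LinearMap.range ((fderiv ℝ φ x).toLinearMap)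

/-- The family of affine spaces associated to a simplex `σ`: the affine hull of `σ`
together with the tangent spaces at projections of points of `Conv σ` onto `M`. -/
def stdFamily (σ : Finset (Euc N)) (T : Euc N → Submodule ℝ (Euc N)) (πM : Euc N → Euc N) :
    Set (AffineSubspace ℝ (Euc N)) :=
  insert (affineSpan ℝ (σ : Set (Euc N)))
    ((fun x => AffineSubspace.mk' (πM x) (T (πM x))) '' convexHull ℝ (σ : Set (Euc N)))

end


local notation "⟪" x ", " y "⟫" => @inner ℝ _ _ x y

variable {N : ℕ}

lemma pyth (V : Submodule ℝ (Euc N)) (x : Euc N) :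
    ‖(Submodule.orthogonalProjectionOnto V x : Euc N)‖^2 + ‖x - Submodule.orthogonalProjectionOnto V x‖^2 = ‖x‖^2 := by
  have h := Submodule.sub_starProjection_mem_orthogonal (K := V) x
  have h0 : ⟪(Submodule.orthogonalProjectionOnto V x : Euc N), x - (Submodule.orthogonalProjectionOnto V x : Euc N)⟫ = 0 :=
    h (Submodule.orthogonalProjectionOnto V x) (SetLike.coe_mem _)
  have hns := norm_add_sq_real ((Submodule.orthogonalProjectionOnto V x : Euc N)) (x - Submodule.orthogonalProjectionOnto V x)
  simp only [add_sub_cancel] at hns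
  rw [hns, h0]; ring


lemma proj_sub_le (V : Submodule ℝ (Euc N)) (x : Euc N) :
    ‖x - Submodule.orthogonalProjectionOnto V x‖ ≤ ‖x‖ := by
  have := pyth V x
  nlinarith [norm_nonneg (x - (Submodule.orthogonalProjectionOnto V x : Euc N)), norm_nonneg x,
    sq_nonneg ‖(Submodule.orthogonalProjectionOnto V x : Euc N)‖]


lemma inner_self_proj (V : Submodule ℝ (Euc N)) (x : Euc N) :
    ⟪x, (Submodule.orthogonalProjectionOnto V x : Euc N)⟫ = ‖(Submodule.orthogonalProjectionOnto V x : Euc N)‖^2 := by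
  have h := Submodule.sub_starProjection_mem_orthogonal (K := V) x
  have h0 : ⟪(Submodule.orthogonalProjectionOnto V x : Euc N), x - (Submodule.orthogonalProjectionOnto V x : Euc N)⟫ = 0 :=
    h (Submodule.orthogonalProjectionOnto V x) (SetLike.coe_mem _)
  have h1 : ⟪x - (Submodule.orthogonalProjectionOnto V x : Euc N), (Submodule.orthogonalProjectionOnto V x : Euc N)⟫ = 0 := by
    rw [real_inner_comm]; exact h0
  have h3 := real_inner_self_eq_norm_sq ((Submodule.orthogonalProjectionOnto V x : Euc N))
  have h2 : ⟪x, (Submodule.orthogonalProjectionOnto V x : Euc N)⟫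
      = ⟪x - (Submodule.orthogonalProjectionOnto V x : Euc N), (Submodule.orthogonalProjectionOnto V x : Euc N)⟫
        + ⟪(Submodule.orthogonalProjectionOnto V x : Euc N), (Submodule.orthogonalProjectionOnto V x : Euc N)⟫ := by
    rw [← inner_add_left, sub_add_cancel]
  rw [h2, h1, h3]; ring


lemma height_le (σ : Finset (Euc N)) {q : Euc N} (hq : q ∈ σ) :
    height σ ≤ infDist q (affineSpan ℝ ((σ.erase q : Finset (Euc N)) : Set (Euc N))) :=
  csInf_le ⟨0, fun x hx => by obtain ⟨v, hv, rfl⟩ := hx; exact infDist_nonneg⟩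
    ⟨q, Finset.mem_coe.mpr hq, rfl⟩


lemma height_nonneg (σ : Finset (Euc N)) : 0 ≤ height σ :=
  Real.sInf_nonneg (fun x hx => by obtain ⟨v, hv, rfl⟩ := hx; exact infDist_nonneg)


lemma erase_coe_eq (σ : Finset (Euc N)) {v : Euc N} (hv : v ∈ σ) :
    ((σ.erase v : Finset (Euc N)) : Set (Euc N))
      = (fun p : σ => (p : Euc N)) '' (Set.univ \ {(⟨v, hv⟩ : σ)}) := by
  ext x
  simp only [Finset.coe_erase, Set.mem_diff, Finset.mem_coe, Set.mem_singleton_iff,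
    Set.mem_image, Set.mem_univ, true_and]
  constructor
  · rintro ⟨hx, hxv⟩; exact ⟨⟨x, hx⟩, by simp [Subtype.ext_iff, hxv], rfl⟩
  · rintro ⟨⟨y, hy⟩, hne, rfl⟩; exact ⟨hy, by simpa [Subtype.ext_iff] using hne⟩


lemma not_mem_erase_span (σ : Finset (Euc N)) (hσ : Nondegenerate σ) {v : Euc N} (hv : v ∈ σ) :
    v ∉ affineSpan ℝ ((σ.erase v : Finset (Euc N)) : Set (Euc N)) := by
  have := hσ.notMem_affineSpan_diff ⟨v, hv⟩ Set.univ
  rwa [← erase_coe_eq σ hv] at this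


lemma height_pos (σ : Finset (Euc N)) (hσ : Nondegenerate σ) (h2 : 2 ≤ σ.card) :
    0 < height σ := by
  have hne : ((fun v => infDist v (affineSpan ℝ ((σ.erase v : Finset (Euc N)) : Set (Euc N)))) ''
      σ).Nonempty := by
    obtain ⟨v, hv⟩ := Finset.card_pos.mp (show 0 < σ.card by omega)
    exact ⟨_, ⟨v, Finset.mem_coe.mpr hv, rfl⟩⟩
  have hfin : ((fun v => infDist v (affineSpan ℝ ((σ.erase v : Finset (Euc N)) : Set (Euc N)))) ''
      σ).Finite := (σ.finite_toSet.image _)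
  have hmem := hne.csInf_mem hfin
  obtain ⟨v, hv, heq⟩ := hmem
  rw [height, ← heq]
  have hvσ : v ∈ σ := Finset.mem_coe.mp hv
  have hclosed : IsClosed ((affineSpan ℝ ((σ.erase v : Finset (Euc N)) : Set (Euc N)) : Set (Euc N))) :=
    AffineSubspace.closed_of_finiteDimensional _
  have hene : (σ.erase v).Nonempty := by
    rw [← Finset.card_pos, Finset.card_erase_of_mem hvσ]; omega
  obtain ⟨w, hw⟩ := hene
  have hspanne : ((affineSpan ℝ ((σ.erase v : Finset (Euc N)) : Set (Euc N)) : Set (Euc N))).Nonempty :=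
    ⟨w, subset_affineSpan ℝ _ (Finset.mem_coe.mpr hw)⟩
  exact (hclosed.notMem_iff_infDist_pos hspanne).mp (not_mem_erase_span σ hσ hvσ)


lemma keyB (H : AffineSubspace ℝ (Euc N)) (hne : (H : Set (Euc N)).Nonempty)
    (σ : Finset (Euc N)) (hσ : Nondegenerate σ) (hσne : σ.Nonempty)
    (t : ℝ) (ht : 0 ≤ t) (hσH : (σ : Set (Euc N)) ⊆ cthickening t (H : Set (Euc N)))
    (u : Euc N) (hu : u ∈ (affineSpan ℝ (σ : Set (Euc N))).direction) (hu1 : ‖u‖ = 1) :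
    ‖u - Submodule.orthogonalProjectionOnto H.direction u‖ ≤ 2 * t * ((σ.card : ℝ) - 1) / height σ := by
  obtain ⟨p₀, hp₀⟩ := hσne
  by_cases h2' : σ.card < 2
  · exfalso
    have hcard1 : σ = {p₀} := by
      apply Finset.eq_singleton_iff_unique_mem.mpr
      refine ⟨hp₀, fun x hx => ?_⟩
      by_contra hxne
      have := Finset.one_lt_card.mpr ⟨x, hx, p₀, hp₀, hxne⟩
      omega
    rw [hcard1] at hu
    simp only [Finset.coe_singleton, direction_affineSpan, vectorSpan_singleton,
      Submodule.mem_bot] at hu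
    rw [hu] at hu1; simp at hu1
  push_neg at h2'
  have hh := height_pos σ hσ h2'
  have hspan : (affineSpan ℝ (σ : Set (Euc N))).direction
      = Submodule.span ℝ (Set.range (fun p : σ => (p : Euc N) - p₀)) := by
    rw [direction_affineSpan, vectorSpan_eq_span_vsub_set_right ℝ (Finset.mem_coe.mpr hp₀),
      Set.image_eq_range]
    simp [vsub_eq_sub]
  rw [hspan, Submodule.mem_span_range_iff_exists_fun] at hu
  obtain ⟨c, hc⟩ := hu
  set V₁ := H.direction with hV₁
  set Q : Euc N →L[ℝ] Euc N :=
    ContinuousLinearMap.id ℝ _ - V₁.subtypeL.comp (Submodule.orthogonalProjectionOnto V₁) with hQdef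
  have hQx : ∀ x, Q x = x - Submodule.orthogonalProjectionOnto V₁ x := fun x => rfl
  have hHclosed : IsClosed (H : Set (Euc N)) := AffineSubspace.closed_of_finiteDimensional _
  have hnear : ∀ x ∈ σ, ∃ y ∈ H, dist x y ≤ t := by
    intro x hx
    obtain ⟨y, hyH, hy⟩ := hHclosed.exists_infDist_eq_dist hne x
    refine ⟨y, hyH, ?_⟩
    rw [← hy]
    have hmem := hσH (Finset.mem_coe.mpr hx)
    rw [Metric.mem_cthickening_iff] at hmem
    calc infDist x (H : Set (Euc N)) = (EMetric.infEdist x (H : Set (Euc N))).toReal := rfl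
      _ ≤ (ENNReal.ofReal t).toReal := ENNReal.toReal_mono ENNReal.ofReal_ne_top hmem
      _ = t := ENNReal.toReal_ofReal ht
  obtain ⟨y₀, hy₀H, hy₀⟩ := hnear p₀ hp₀
  have hQp : ∀ p ∈ σ, ‖Q (p - p₀)‖ ≤ 2 * t := by
    intro p hp
    obtain ⟨yp, hypH, hyp⟩ := hnear p hp
    have hsplit : p - p₀ = (yp - y₀) + ((p - yp) - (p₀ - y₀)) := by abel
    have hy : yp - y₀ ∈ V₁ := by
      have := AffineSubspace.vsub_mem_direction hypH hy₀H
      rwa [vsub_eq_sub] at this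
    have hQy : Q (yp - y₀) = 0 := by
      rw [hQx, ← Submodule.starProjection_apply, Submodule.starProjection_eq_self_iff.mpr hy, sub_self]
    rw [hsplit, map_add, hQy, zero_add]
    calc ‖Q ((p - yp) - (p₀ - y₀))‖ ≤ ‖(p - yp) - (p₀ - y₀)‖ := by
          rw [hQx]; exact proj_sub_le _ _
      _ ≤ ‖p - yp‖ + ‖p₀ - y₀‖ := norm_sub_le _ _
      _ ≤ t + t := by
          rw [← dist_eq_norm, ← dist_eq_norm]
          exact add_le_add hyp hy₀
      _ = 2 * t := by ring
  have hcoef : ∀ i : σ, (i : Euc N) ≠ p₀ → |c i| ≤ 1 / height σ := by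
    intro i hip
    set q := (i : Euc N) with hq
    set A := affineSpan ℝ ((σ.erase q : Finset (Euc N)) : Set (Euc N)) with hA
    set W := A.direction with hW
    set w := (q - p₀) - Submodule.orthogonalProjectionOnto W (q - p₀) with hwdef
    have hp₀A : p₀ ∈ A :=
      subset_affineSpan ℝ _ (Finset.mem_coe.mpr (Finset.mem_erase.mpr ⟨fun h => hip h.symm, hp₀⟩))
    have hwperp : ∀ v ∈ W, ⟪v, w⟫ = 0 := fun v hv =>
      (Submodule.sub_starProjection_mem_orthogonal (K := W) (q - p₀)) v hv
    have hterm : ∀ j : σ, j ≠ i → c j * ⟪(j : Euc N) - p₀, w⟫ = 0 := by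
      intro j hj
      by_cases hjp : (j : Euc N) = p₀
      · rw [hjp]; simp
      · have hjq : (j : Euc N) ≠ q := fun h => hj (Subtype.ext h)
        have hjA : (j : Euc N) ∈ A :=
          subset_affineSpan ℝ _ (Finset.mem_coe.mpr (Finset.mem_erase.mpr ⟨hjq, j.2⟩))
        have : (j : Euc N) - p₀ ∈ W := by
          have := AffineSubspace.vsub_mem_direction hjA hp₀A
          rwa [vsub_eq_sub] at this
        rw [hwperp _ this, mul_zero]
    have hinner : ⟪u, w⟫ = c i * ⟪q - p₀, w⟫ := by
      rw [← hc, sum_inner]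
      simp only [real_inner_smul_left]
      exact Finset.sum_eq_single i (fun j _ hj => hterm j hj)
        (fun h => absurd (Finset.mem_univ i) h)
    have hqw : ⟪q - p₀, w⟫ = ‖w‖ ^ 2 := by
      have hdecomp : q - p₀ = w + (Submodule.orthogonalProjectionOnto W (q - p₀) : Euc N) := by
        rw [hwdef]; abel
      rw [hdecomp, inner_add_left, real_inner_self_eq_norm_sq,
        hwperp _ (SetLike.coe_mem _), add_zero]
    have hwnorm : height σ ≤ ‖w‖ := by
      have hyA : (Submodule.orthogonalProjectionOnto W (q - p₀) : Euc N) +ᵥ p₀ ∈ A :=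
        AffineSubspace.vadd_mem_of_mem_direction (SetLike.coe_mem _) hp₀A
      calc height σ ≤ infDist q (A : Set (Euc N)) := height_le σ i.2
        _ ≤ dist q ((Submodule.orthogonalProjectionOnto W (q - p₀) : Euc N) +ᵥ p₀) :=
            infDist_le_dist_of_mem hyA
        _ = ‖w‖ := by
            rw [dist_eq_norm, hwdef]
            congr 1
            simp only [vadd_eq_add]
            abel
    have habs : |c i| * ‖w‖ ^ 2 ≤ ‖w‖ := by
      calc |c i| * ‖w‖ ^ 2 = |c i * ⟪q - p₀, w⟫| := by
            rw [hqw, abs_mul, abs_of_nonneg (sq_nonneg ‖w‖)]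
        _ = |⟪u, w⟫| := by rw [hinner]
        _ ≤ ‖u‖ * ‖w‖ := abs_real_inner_le_norm _ _
        _ = ‖w‖ := by rw [hu1, one_mul]
    have hw0 : 0 < ‖w‖ := lt_of_lt_of_le hh hwnorm
    have h1 : |c i| * ‖w‖ ≤ 1 := by nlinarith
    rw [le_div_iff₀ hh]
    nlinarith [abs_nonneg (c i)]
  have hQu : Q u = ∑ j : σ, c j • Q ((j : Euc N) - p₀) := by
    rw [← hc, map_sum]
    simp only [map_smul]
  set i₀ : σ := ⟨p₀, hp₀⟩ with hi₀
  have hQu0 : ‖c i₀ • Q ((i₀ : Euc N) - p₀)‖ = 0 := by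
    simp [hi₀]
  have hbound : ‖Q u‖ ≤ ∑ j ∈ Finset.univ.erase i₀, ((1 / height σ) * (2 * t)) := by
    rw [hQu]
    calc ‖∑ j : σ, c j • Q ((j : Euc N) - p₀)‖ ≤ ∑ j : σ, ‖c j • Q ((j : Euc N) - p₀)‖ :=
          norm_sum_le _ _
      _ = ∑ j ∈ Finset.univ.erase i₀, ‖c j • Q ((j : Euc N) - p₀)‖ := by
          rw [← Finset.sum_erase_add _ _ (Finset.mem_univ i₀), hQu0, add_zero]
      _ ≤ ∑ j ∈ Finset.univ.erase i₀, ((1 / height σ) * (2 * t)) := by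
          apply Finset.sum_le_sum
          intro j hj
          have hjp : (j : Euc N) ≠ p₀ := by
            intro h
            exact (Finset.mem_erase.mp hj).1 (Subtype.ext h)
          rw [norm_smul, Real.norm_eq_abs]
          exact mul_le_mul (hcoef j hjp) (hQp _ j.2) (norm_nonneg _)
            (by positivity)
  have hcard : ((Finset.univ.erase i₀).card : ℝ) = (σ.card : ℝ) - 1 := by
    rw [Finset.card_erase_of_mem (Finset.mem_univ i₀), Finset.card_univ, Fintype.card_coe]
    have : 1 ≤ σ.card := by omega
    push_cast [Nat.cast_sub this]
    ring
  rw [Finset.sum_const, nsmul_eq_mul] at hbound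
  calc ‖u - Submodule.orthogonalProjectionOnto V₁ u‖ = ‖Q u‖ := by rw [hQx]
    _ ≤ ((Finset.univ.erase i₀).card : ℝ) * ((1 / height σ) * (2 * t)) := hbound
    _ = 2 * t * ((σ.card : ℝ) - 1) / height σ := by
        rw [hcard]; field_simp


theorem whitney_angle_bound (N d : ℕ) (H : AffineSubspace ℝ (Euc N))
    (hne : (H : Set (Euc N)).Nonempty)
    (hd : Module.finrank ℝ H.direction = d)
    (σ : Finset (Euc N)) (hσ : Nondegenerate σ) (hσne : σ.Nonempty)
    (hdim : σ.card ≤ d + 1) (t : ℝ) (ht : 0 ≤ t)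
    (hσH : (σ : Set (Euc N)) ⊆ cthickening t (H : Set (Euc N))) :
    Real.sin (affAngle (affineSpan ℝ (σ : Set (Euc N))) H) ≤
      2 * t * ((σ.card : ℝ) - 1) / height σ := by
  set V₁ := H.direction with hV₁
  set B := 2 * t * ((σ.card : ℝ) - 1) / height σ with hB
  have hB0 : 0 ≤ B := by
    apply div_nonneg _ (height_nonneg σ)
    have h1 : (1 : ℝ) ≤ (σ.card : ℝ) := by exact_mod_cast hσne.card_pos
    nlinarith
  set θ := Real.arcsin (min B 1) with hθ
  have hmin0 : 0 ≤ min B 1 := le_min hB0 one_pos.le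
  have hmin1 : min B 1 ≤ 1 := min_le_right _ _
  have hθ0 : 0 ≤ θ := Real.arcsin_nonneg.mpr hmin0
  have hθpi : θ ≤ Real.pi / 2 := Real.arcsin_le_pi_div_two _
  set S : Set ℝ := {a | ∃ v₀ ∈ (affineSpan ℝ (σ : Set (Euc N))).direction, ‖v₀‖ = 1 ∧
    a = sInf {b | ∃ v₁ ∈ V₁, ‖v₁‖ = 1 ∧ b = InnerProductGeometry.angle v₀ v₁}} with hSdef
  have hrw : affAngle (affineSpan ℝ (σ : Set (Euc N))) H = sSup S := rfl
  have hS : ∀ a ∈ S, 0 ≤ a ∧ a ≤ θ := by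
    rintro a ⟨v₀, hv₀, hv₀1, rfl⟩
    have hD : ‖v₀ - Submodule.orthogonalProjectionOnto V₁ v₀‖ ≤ B := keyB H hne σ hσ hσne t ht hσH v₀ hv₀ hv₀1
    have hD1 : ‖v₀ - Submodule.orthogonalProjectionOnto V₁ v₀‖ ≤ 1 := hv₀1 ▸ proj_sub_le V₁ v₀
    have hbdd : BddBelow {b | ∃ v₁ ∈ V₁, ‖v₁‖ = 1 ∧ b = InnerProductGeometry.angle v₀ v₁} :=
      ⟨0, by rintro b ⟨v₁, _, _, rfl⟩; exact InnerProductGeometry.angle_nonneg _ _⟩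
    have hnn : 0 ≤ sInf {b | ∃ v₁ ∈ V₁, ‖v₁‖ = 1 ∧ b = InnerProductGeometry.angle v₀ v₁} :=
      Real.sInf_nonneg (by rintro b ⟨v₁, _, _, rfl⟩; exact InnerProductGeometry.angle_nonneg _ _)
    refine ⟨hnn, ?_⟩
    by_cases hP : (Submodule.orthogonalProjectionOnto V₁ v₀ : Euc N) = 0
    · by_cases hbot : V₁ = ⊥
      · have hempty : {b | ∃ v₁ ∈ V₁, ‖v₁‖ = 1 ∧ b = InnerProductGeometry.angle v₀ v₁} = ∅ := by
          ext b
          simp only [Set.mem_setOf_eq, Set.mem_empty_iff_false, iff_false]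
          rintro ⟨v₁, hv₁, hv₁1, rfl⟩
          rw [hbot, Submodule.mem_bot] at hv₁
          rw [hv₁] at hv₁1; simp at hv₁1
        rw [hempty, Real.sInf_empty]; exact hθ0
      · obtain ⟨v, hvV, hv0⟩ := Submodule.ne_bot_iff V₁ |>.mp hbot
        set v₁ := ‖v‖⁻¹ • v with hv₁def
        have hv₁V : v₁ ∈ V₁ := V₁.smul_mem _ hvV
        have hv₁1 : ‖v₁‖ = 1 := norm_smul_inv_norm hv0
        have hperp : ⟪v₀, v₁⟫ = 0 := by
          have hmem : v₀ ∈ V₁ᗮ := by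
            have : v₀ - (Submodule.orthogonalProjectionOnto V₁ v₀ : Euc N) ∈ V₁ᗮ :=
              Submodule.sub_starProjection_mem_orthogonal (K := V₁) v₀
            rwa [hP, sub_zero] at this
          rw [real_inner_comm]
          exact hmem v₁ hv₁V
        have hangle : InnerProductGeometry.angle v₀ v₁ = Real.pi / 2 :=
          InnerProductGeometry.inner_eq_zero_iff_angle_eq_pi_div_two v₀ v₁ |>.mp hperp
        have hD1' : (1 : ℝ) ≤ B := by
          have : ‖v₀ - Submodule.orthogonalProjectionOnto V₁ v₀‖ = 1 := by rw [hP, sub_zero, hv₀1]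
          linarith [hD, this.symm.le, this.ge]
        have hθeq : θ = Real.pi / 2 := by
          rw [hθ, min_eq_right hD1', Real.arcsin_one]
        calc sInf {b | ∃ v₁ ∈ V₁, ‖v₁‖ = 1 ∧ b = InnerProductGeometry.angle v₀ v₁}
            ≤ InnerProductGeometry.angle v₀ v₁ := csInf_le hbdd ⟨v₁, hv₁V, hv₁1, rfl⟩
          _ = θ := by rw [hangle, hθeq]
    · set pn := ‖(Submodule.orthogonalProjectionOnto V₁ v₀ : Euc N)‖ with hpn
      have hpn0 : 0 < pn := norm_pos_iff.mpr hP
      set v₁ := pn⁻¹ • (Submodule.orthogonalProjectionOnto V₁ v₀ : Euc N) with hv₁def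
      have hv₁V : v₁ ∈ V₁ := V₁.smul_mem _ (SetLike.coe_mem _)
      have hv₁1 : ‖v₁‖ = 1 := norm_smul_inv_norm hP
      have hinner : ⟪v₀, v₁⟫ = pn := by
        rw [hv₁def, real_inner_smul_right, inner_self_proj, ← hpn]
        field_simp
      have hangle : InnerProductGeometry.angle v₀ v₁
          = Real.arcsin ‖v₀ - Submodule.orthogonalProjectionOnto V₁ v₀‖ := by
        rw [InnerProductGeometry.angle, hinner, hv₀1, hv₁1, one_mul, div_one,
          Real.arccos_eq_arcsin hpn0.le]
        congr 1
        have hp := pyth V₁ v₀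
        rw [hv₀1] at hp
        have : 1 - pn ^ 2 = ‖v₀ - Submodule.orthogonalProjectionOnto V₁ v₀‖ ^ 2 := by
          rw [hpn]; nlinarith
        rw [this, Real.sqrt_sq (norm_nonneg _)]
      calc sInf {b | ∃ v₁ ∈ V₁, ‖v₁‖ = 1 ∧ b = InnerProductGeometry.angle v₀ v₁}
          ≤ InnerProductGeometry.angle v₀ v₁ := csInf_le hbdd ⟨v₁, hv₁V, hv₁1, rfl⟩
        _ = Real.arcsin ‖v₀ - Submodule.orthogonalProjectionOnto V₁ v₀‖ := hangle
        _ ≤ θ := Real.monotone_arcsin (le_min hD hD1)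
  rw [hrw]
  by_cases hSne : S.Nonempty
  · have hsup_le : sSup S ≤ θ := csSup_le hSne (fun a ha => (hS a ha).2)
    have hsup0 : 0 ≤ sSup S := by
      obtain ⟨a, ha⟩ := hSne
      exact (hS a ha).1.trans (le_csSup ⟨θ, fun b hb => (hS b hb).2⟩ ha)
    have hpi2 := Real.pi_div_two_pos
    calc Real.sin (sSup S) ≤ Real.sin θ := by
          apply Real.strictMonoOn_sin.monotoneOn ⟨by linarith, by linarith⟩
            ⟨by linarith, by linarith⟩ hsup_le
      _ = min B 1 := Real.sin_arcsin (by linarith) hmin1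
      _ ≤ B := min_le_left _ _
  · rw [Set.not_nonempty_iff_eq_empty.mp hSne, Real.sSup_empty, Real.sin_zero]
    exact hB0
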